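/- Let X, X' be coupled random vectors in {0,...,k}^n where X has distribution prod_i P_{r_i} and X' has distribution which differs only in the j-th coordinate, such that P[X = X'] = 1 - epsilon and on the event X != X' we have X_j = 0, X'_j = k, and X_i = X'_i for all i != j. Then for any monotone-decreasing-in-coordinate-j function f: {0,...,k}^n -> {0,1} (meaning f(X') <= f(X) under the coupling as described), P[f(X') != f(X)] = epsilon * I_j, where I_j is the probability that coordinate j of X is pivotal for f given X_j = 0 can be changed to k; consequently the partial derivative of the crossing probability with respect to the j-th parameter equals the influence (Margulis–Russo formula for multi-valued product spaces). -/

import Mathlib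

open scoped Classical

/-- Margulis–Russo formula for multi-valued product spaces:
for the one-parameter family of product measures `r(h) = p + h(-1, 0, …, 0, 1)` on
`{0,…,k}` and an increasing event `E ⊆ {0,…,k}ⁿ` with indicator `f`, the derivative
`d/dh P_{r(h)}^n(E)` at `h₀` equals the total influence `∑_j I_{f,r(h₀)}(j)`, where
`I_{f,r(h₀)}(j)` is the probability that coordinate `j` is pivotal for `f`. -/
theorem margulis_russo_multivalued (k n : ℕ) (hk : 0 < k)
    (p : Fin (k + 1) → ℝ) (hp : ∀ i, 0 ≤ p i) (hsum : ∑ i, p i = 1)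
    (E : Finset (Fin n → Fin (k + 1)))
    (hinc : ∀ x ∈ E, ∀ y : Fin n → Fin (k + 1), (∀ i, x i ≤ y i) → y ∈ E)
    (h₀ : ℝ) (hh0 : 0 ≤ h₀) (hh1 : h₀ ≤ p 0) (hh2 : p (Fin.last k) + h₀ ≤ 1) :
    let r : ℝ → Fin (k + 1) → ℝ := fun h i =>
      if i = 0 then p i - h else if i = Fin.last k then p i + h else p i
    HasDerivAt (fun h => ∑ x ∈ E, ∏ i, r h (x i))
      (∑ j : Fin n, ∑ x : Fin n → Fin (k + 1),
        if (∃ y : Fin n → Fin (k + 1), (∀ i, i ≠ j → y i = x i) ∧ ((y ∈ E) ≠ (x ∈ E)))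
        then ∏ i, r h₀ (x i) else 0) h₀ := by
  intro r
  classical
  have hlast : (Fin.last k) ≠ (0 : Fin (k + 1)) := by
    simp [Fin.ext_iff, hk.ne']
  set d : Fin (k + 1) → ℝ := fun v =>
    (if v = Fin.last k then (1 : ℝ) else 0) - (if v = 0 then 1 else 0) with hd
  have hrv : ∀ (h : ℝ) v, r h v = p v + d v * h := by
    intro h v
    show (if v = 0 then p v - h else if v = Fin.last k then p v + h else p v) = _
    by_cases h0 : v = 0
    · subst h0; simp [hd, Ne.symm hlast]; try ring
    · by_cases hl : v = Fin.last k
      · subst hl; simp [hd, hlast]; try ring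
      · simp [hd, h0, hl]
  have hsum_d : ∑ v, d v = 0 := by
    simp [hd, Finset.sum_sub_distrib]
  have hsum_r : ∀ h : ℝ, ∑ v, r h v = 1 := by
    intro h
    simp only [hrv]
    rw [Finset.sum_add_distrib, hsum, ← Finset.sum_mul, hsum_d]
    ring
  have hder : ∀ v, HasDerivAt (fun h => r h v) (d v) h₀ := by
    intro v
    have hfun : (fun h => r h v) = fun h => p v + d v * h := funext fun h => hrv h v
    rw [hfun]
    simpa using ((hasDerivAt_id h₀).const_mul (d v)).const_add (p v)
  have H : HasDerivAt (fun h => ∑ x ∈ E, ∏ i, r h (x i))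
      (∑ x ∈ E, ∑ j, (∏ i ∈ Finset.univ.erase j, r h₀ (x i)) • d (x j)) h₀ :=
    HasDerivAt.fun_sum fun (x : Fin n → Fin (k + 1)) _ => HasDerivAt.fun_finsetProd fun i _ => hder (x i)
  convert H using 1
  rw [Finset.sum_comm (s := E) (t := Finset.univ)]
  refine Finset.sum_congr rfl fun j _ => ?_
  simp only [smul_eq_mul]
  have hEsum : ∀ F : (Fin n → Fin (k + 1)) → ℝ,
      ∑ x ∈ E, F x = ∑ x, (if x ∈ E then F x else 0) := by
    intro F
    rw [Finset.sum_ite_mem, Finset.univ_inter]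
  rw [hEsum]
  set e := Equiv.funSplitAt j (Fin (k + 1)) with he
  have reindex : ∀ F : (Fin n → Fin (k + 1)) → ℝ,
      ∑ x, F x = ∑ z : { i : Fin n // i ≠ j } → Fin (k + 1), ∑ v, F (e.symm (v, z)) := by
    intro F
    rw [← Fintype.sum_equiv e.symm (fun q => F (e.symm q)) F (fun q => rfl),
      Fintype.sum_prod_type]
    exact Finset.sum_comm
  rw [reindex, reindex]
  refine Finset.sum_congr rfl fun z _ => ?_
  have hxj : ∀ v : Fin (k + 1), e.symm (v, z) j = v := by
    intro v; simp [he]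
  have hxi : ∀ (v : Fin (k + 1)) (i : Fin n) (hij : i ≠ j),
      e.symm (v, z) i = z ⟨i, hij⟩ := by
    intro v i hij; simp [he, hij]
  set C := ∏ i ∈ Finset.univ.erase j, r h₀ (e.symm ((0 : Fin (k + 1)), z) i) with hC
  have hprod_erase : ∀ v, ∏ i ∈ Finset.univ.erase j, r h₀ (e.symm (v, z) i) = C := by
    intro v
    refine Finset.prod_congr rfl fun i hi => ?_
    have hij : i ≠ j := Finset.ne_of_mem_erase hi
    rw [hxi v i hij, hxi 0 i hij]
  have hprod : ∀ v, ∏ i, r h₀ (e.symm (v, z) i) = r h₀ v * C := by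
    intro v
    rw [← Finset.mul_prod_erase Finset.univ _ (Finset.mem_univ j), hxj v, hprod_erase v]
  have hmono : ∀ v w : Fin (k + 1), v ≤ w → e.symm (v, z) ∈ E → e.symm (w, z) ∈ E := by
    intro v w hvw hmem
    refine hinc _ hmem _ fun i => ?_
    by_cases hij : i = j
    · subst hij; rw [hxj, hxj]; exact hvw
    · rw [hxi v i hij, hxi w i hij]
  have hpiv : ∀ v : Fin (k + 1),
      (∃ y : Fin n → Fin (k + 1), (∀ i, i ≠ j → y i = e.symm (v, z) i) ∧
        ((y ∈ E) ≠ (e.symm (v, z) ∈ E)))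
      ↔ (e.symm (Fin.last k, z) ∈ E ∧ e.symm ((0 : Fin (k + 1)), z) ∉ E) := by
    intro v
    constructor
    · rintro ⟨y, hy, hne⟩
      have hyz : y = e.symm (y j, z) := by
        funext i
        by_cases hij : i = j
        · subst hij; rw [hxj]
        · rw [hxi _ i hij, ← hxi v i hij, hy i hij]
      by_cases hyE : y ∈ E
      · have hxE : e.symm (v, z) ∉ E := fun h => hne (propext (iff_of_true hyE h))
        refine ⟨?_, fun h0 => hxE (hmono _ _ (Fin.zero_le _) h0)⟩
        rw [hyz] at hyE
        exact hmono _ _ (Fin.le_last _) hyE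
      · have hxE : e.symm (v, z) ∈ E := by
          by_contra hne'
          exact hne (propext (iff_of_false hyE hne'))
        refine ⟨hmono _ _ (Fin.le_last _) hxE, fun h0 => hyE ?_⟩
        rw [hyz]
        exact hmono _ _ (Fin.zero_le _) h0
    · rintro ⟨hl, h0⟩
      by_cases hxE : e.symm (v, z) ∈ E
      · exact ⟨e.symm (0, z), fun i hij => by rw [hxi _ i hij, hxi _ i hij],
          fun h => h0 ((iff_of_eq h).mpr hxE)⟩
      · exact ⟨e.symm (Fin.last k, z), fun i hij => by rw [hxi _ i hij, hxi _ i hij],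
          fun h => hxE ((iff_of_eq h).mp hl)⟩
  have hLHS : (∑ v, if (∃ y : Fin n → Fin (k + 1), (∀ i, i ≠ j → y i = e.symm (v, z) i) ∧
        ((y ∈ E) ≠ (e.symm (v, z) ∈ E))) then ∏ i, r h₀ (e.symm (v, z) i) else 0)
      = if (e.symm (Fin.last k, z) ∈ E ∧ e.symm ((0 : Fin (k + 1)), z) ∉ E) then C else 0 := by
    by_cases hP : e.symm (Fin.last k, z) ∈ E ∧ e.symm ((0 : Fin (k + 1)), z) ∉ E
    · rw [if_pos hP]
      have hterm : ∀ v ∈ (Finset.univ : Finset (Fin (k + 1))),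
          (if (∃ y : Fin n → Fin (k + 1), (∀ i, i ≠ j → y i = e.symm (v, z) i) ∧
            ((y ∈ E) ≠ (e.symm (v, z) ∈ E))) then ∏ i, r h₀ (e.symm (v, z) i) else 0)
          = r h₀ v * C := fun v _ => by rw [if_pos ((hpiv v).mpr hP), hprod v]
      rw [Finset.sum_congr rfl hterm, ← Finset.sum_mul, hsum_r, one_mul]
    · rw [if_neg hP]
      exact Finset.sum_eq_zero fun v _ => if_neg fun hpv => hP ((hpiv v).mp hpv)
  rw [hLHS]
  have hRHS : (∑ v, if e.symm (v, z) ∈ E then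
        (∏ i ∈ Finset.univ.erase j, r h₀ (e.symm (v, z) i)) * d (e.symm (v, z) j) else 0)
      = (if e.symm (Fin.last k, z) ∈ E then C else 0)
        - (if e.symm ((0 : Fin (k + 1)), z) ∈ E then C else 0) := by
    have step : ∀ v ∈ (Finset.univ : Finset (Fin (k + 1))),
        (if e.symm (v, z) ∈ E then
          (∏ i ∈ Finset.univ.erase j, r h₀ (e.symm (v, z) i)) * d (e.symm (v, z) j) else 0)
        = (if v = Fin.last k then (if e.symm (v, z) ∈ E then C else 0) else 0)
          - (if v = 0 then (if e.symm (v, z) ∈ E then C else 0) else 0) := by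
      intro v _
      rw [hprod_erase v, hxj v]
      by_cases hv : e.symm (v, z) ∈ E <;> simp [hv, hd, mul_sub, mul_ite]
    rw [Finset.sum_congr rfl step, Finset.sum_sub_distrib, Finset.sum_ite_eq',
      Finset.sum_ite_eq']
    simp
  rw [hRHS]
  by_cases h0 : e.symm ((0 : Fin (k + 1)), z) ∈ E
  · have hl : e.symm (Fin.last k, z) ∈ E := hmono _ _ (Fin.zero_le _) h0
    simp [h0, hl]
  · by_cases hl : e.symm (Fin.last k, z) ∈ E <;> simp [h0, hl]
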